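/- Let Φ : ℝ^n → ℝ be differentiable, bounded below, with ∇Φ Lipschitz with constant L, let γ > 0, β > 2L, and let X be either ℝ^n or the nonnegative orthant {x ∈ ℝ^n : xᵢ ≥ 0 for all i}. Let (x^k, y^k, z^k) be an ADMM_p sequence for these data. Then ‖y^k − y^{k+1}‖₂ → 0 as k → ∞. -/

import Mathlib

noncomputable section
open Classical

/-- The ℓ¹ norm on ℝ^n. -/
def l1 {n : ℕ} (x : EuclideanSpace ℝ (Fin n)) : ℝ := ∑ i, |x i|

/-- The ratio ‖x‖₁/‖x‖₂ with the convention that it equals 1 at the origin. -/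
def ratio {n : ℕ} (x : EuclideanSpace ℝ (Fin n)) : ℝ :=
  if x = 0 then 1 else l1 x / ‖x‖

/-- `(x, y, z)` is an ADMM_p sequence for data `(β, γ, X, Φ)`:
at every step, `x^{k+1}` globally minimizes the proximal subproblem of the ratio `‖·‖₁/‖·‖₂`
over `X`, `y^{k+1}` globally minimizes the `Φ`-subproblem, and `z` is updated by the
multiplier rule. -/
def ADMMpSeq {n : ℕ} (β γ : ℝ) (X : Set (EuclideanSpace ℝ (Fin n)))
    (Φ : EuclideanSpace ℝ (Fin n) → ℝ)
    (x y z : ℕ → EuclideanSpace ℝ (Fin n)) : Prop :=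
  ∀ k : ℕ,
    (x (k + 1) ∈ X ∧ ∀ u ∈ X,
      ratio (x (k + 1)) + β / (2 * γ) * ‖x (k + 1) - (y k - β⁻¹ • z k)‖ ^ 2 ≤
        ratio u + β / (2 * γ) * ‖u - (y k - β⁻¹ • z k)‖ ^ 2) ∧
    (∀ u : EuclideanSpace ℝ (Fin n),
      Φ (y (k + 1)) + β / 2 * ‖y (k + 1) - x (k + 1) - β⁻¹ • z k‖ ^ 2 ≤
        Φ u + β / 2 * ‖u - x (k + 1) - β⁻¹ • z k‖ ^ 2) ∧
    z (k + 1) = z k + β • (x (k + 1) - y (k + 1))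

open InnerProductSpace RealInnerProductSpace

section helpers
variable {E : Type*} [NormedAddCommGroup E] [InnerProductSpace ℝ E] [CompleteSpace E]

/-- monotone helper -/
lemma my_mono_aux {u u' : ℝ → ℝ} (h : ∀ t, HasDerivAt u (u' t) t)
    (h' : ∀ t ∈ Set.Icc (0:ℝ) 1, 0 ≤ u' t) : u 0 ≤ u 1 := by
  have hmono := monotoneOn_of_deriv_nonneg (convex_Icc (0:ℝ) 1)
    (fun t _ => (h t).continuousAt.continuousWithinAt)
    (fun t ht => ((h t).differentiableAt).differentiableWithinAt)
    (fun t ht => by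
      rw [(h t).deriv]
      exact h' t (Set.mem_of_mem_of_subset ht (by rw [interior_Icc]; exact Set.Ioo_subset_Icc_self)))
  exact hmono (by norm_num) (by norm_num) (by norm_num)

lemma my_descent {Φ : E → ℝ} {g : E → E} (hdiff : ∀ x, HasGradientAt Φ (g x) x)
    {L : ℝ} (hlip : ∀ x y, ‖g x - g y‖ ≤ L * ‖x - y‖) (a b : E) :
    |Φ b - Φ a - ⟪g a, b - a⟫_ℝ| ≤ L / 2 * ‖b - a‖ ^ 2 := by
  set d := b - a with hd
  have hline : ∀ t : ℝ, HasDerivAt (fun s : ℝ => Φ (a + s • d)) ⟪g (a + t • d), d⟫_ℝ t := by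
    intro t
    have h1 : HasDerivAt (fun s : ℝ => a + s • d) d t := by
      simpa using ((hasDerivAt_id t).smul_const d).const_add a
    have h2 := ((hdiff (a + t • d)).hasFDerivAt).comp_hasDerivAt t h1
    exact h2
  have hinner : ∀ t ∈ Set.Icc (0:ℝ) 1, |⟪g (a + t • d), d⟫_ℝ - ⟪g a, d⟫_ℝ| ≤ L * t * ‖d‖^2 := by
    intro t ht
    have h3 : ⟪g (a + t • d), d⟫_ℝ - ⟪g a, d⟫_ℝ = ⟪g (a + t • d) - g a, d⟫_ℝ := by
      rw [inner_sub_left]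
    rw [h3]
    calc |⟪g (a + t • d) - g a, d⟫_ℝ| ≤ ‖g (a + t • d) - g a‖ * ‖d‖ := abs_real_inner_le_norm _ _
      _ ≤ (L * ‖(a + t • d) - a‖) * ‖d‖ := by
          exact mul_le_mul_of_nonneg_right (hlip _ _) (norm_nonneg _)
      _ = L * t * ‖d‖^2 := by
          rw [add_sub_cancel_left, norm_smul, Real.norm_eq_abs, abs_of_nonneg ht.1]; ring
  have hb : a + (1:ℝ) • d = b := by rw [one_smul, hd]; abel
  have ha : a + (0:ℝ) • d = a := by rw [zero_smul, add_zero]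
  rw [abs_le]
  constructor
  · -- lower bound: -(L/2‖d‖²) ≤ Φ b - Φ a - ⟪g a, d⟫
    have := my_mono_aux (u := fun t => Φ (a + t • d) - t * ⟪g a, d⟫_ℝ + L * ‖d‖^2 * t^2 / 2)
      (u' := fun t => (⟪g (a + t • d), d⟫_ℝ - ⟪g a, d⟫_ℝ) + L * ‖d‖^2 * t)
      (fun t => by
        have := ((hline t).sub ((hasDerivAt_id t).mul_const ⟪g a, d⟫_ℝ)).add
          (((hasDerivAt_pow 2 t).const_mul (L * ‖d‖^2)).div_const 2)
        convert this using 1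
        · rfl
        · rfl
        · rfl
        push_cast; ring)
      (fun t ht => by
        have h4 := hinner t ht
        have h5 := neg_abs_le (⟪g (a + t • d), d⟫_ℝ - ⟪g a, d⟫_ℝ)
        nlinarith [ht.1])
    simp only [hb, ha, zero_smul, add_zero] at this
    nlinarith [this]
  · have := my_mono_aux (u := fun t => L * ‖d‖^2 * t^2 / 2 - (Φ (a + t • d) - t * ⟪g a, d⟫_ℝ))
      (u' := fun t => L * ‖d‖^2 * t - (⟪g (a + t • d), d⟫_ℝ - ⟪g a, d⟫_ℝ))
      (fun t => by
        have := (((hasDerivAt_pow 2 t).const_mul (L * ‖d‖^2)).div_const 2).sub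
          ((hline t).sub ((hasDerivAt_id t).mul_const ⟪g a, d⟫_ℝ))
        convert this using 1
        · rfl
        · rfl
        · rfl
        push_cast; ring)
      (fun t ht => by
        have h4 := hinner t ht
        have h5 := le_abs_self (⟪g (a + t • d), d⟫_ℝ - ⟪g a, d⟫_ℝ)
        nlinarith [ht.1])
    simp only [hb, ha, zero_smul, add_zero] at this
    nlinarith [this]

lemma my_expand {β : ℝ} (hβ : β ≠ 0) (u y z : E) :
    β / 2 * ‖u - (y - β⁻¹ • z)‖ ^ 2 =
      β / 2 * ‖u - y‖ ^ 2 + ⟪z, u - y⟫_ℝ + ‖z‖ ^ 2 / (2 * β) := by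
  have h1 : u - (y - β⁻¹ • z) = (u - y) + β⁻¹ • z := by abel
  rw [h1, norm_add_sq_real, real_inner_smul_right, norm_smul, Real.norm_eq_abs]
  rw [mul_pow, sq_abs, real_inner_comm]
  field_simp

lemma my_foc {Φ : E → ℝ} {g : E → E} (hdiff : ∀ x, HasGradientAt Φ (g x) x)
    (β : ℝ) (c y₀ : E)
    (hmin : ∀ u, Φ y₀ + β / 2 * ‖y₀ - c‖ ^ 2 ≤ Φ u + β / 2 * ‖u - c‖ ^ 2) :
    g y₀ + β • (y₀ - c) = 0 := by
  have hq : HasFDerivAt (fun v : E => Φ v + β / 2 * ‖v - c‖ ^ 2)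
      (InnerProductSpace.toDual ℝ E (g y₀ + β • (y₀ - c))) y₀ := by
    have hsub : HasFDerivAt (fun v : E => v - c) (ContinuousLinearMap.id ℝ E) y₀ :=
      (hasFDerivAt_id y₀).sub_const c
    have hin := (hsub.inner ℝ hsub).const_mul (β / 2)
    have hΦ : HasFDerivAt Φ (InnerProductSpace.toDual ℝ E (g y₀)) y₀ := (hdiff y₀).hasFDerivAt
    have hnorm : ∀ v : E, ‖v - c‖ ^ 2 = ⟪v - c, v - c⟫_ℝ := fun v =>
      (real_inner_self_eq_norm_sq _).symm
    have := hΦ.add hin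
    convert this using 1
    · rfl
    · rfl
    · funext v; rw [hnorm v]; rfl
    · ext w
      simp only [ContinuousLinearMap.add_apply, ContinuousLinearMap.coe_smul', Pi.smul_apply,
        ContinuousLinearMap.coe_comp', Function.comp_apply, ContinuousLinearMap.prod_apply,
        ContinuousLinearMap.coe_id', id_eq, fderivInnerCLM_apply, smul_eq_mul,
        InnerProductSpace.toDual_apply_apply, inner_add_left, real_inner_smul_left,
        inner_sub_left, inner_sub_right, inner_add_right, real_inner_smul_right, real_inner_comm w]
      ring
  have hloc : IsLocalMin (fun v : E => Φ v + β / 2 * ‖v - c‖ ^ 2) y₀ :=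
    Filter.Eventually.of_forall hmin
  have hzero := hloc.hasFDerivAt_eq_zero hq
  have := congrArg (InnerProductSpace.toDual ℝ E).symm hzero
  simpa using this

lemma my_expand' {β : ℝ} (hβ : β ≠ 0) (v xx z : E) :
    β / 2 * ‖v - xx - β⁻¹ • z‖ ^ 2 =
      β / 2 * ‖xx - v‖ ^ 2 + ⟪z, xx - v⟫_ℝ + ‖z‖ ^ 2 / (2 * β) := by
  have h1 : v - xx - β⁻¹ • z = -((xx - v) + β⁻¹ • z) := by abel
  rw [h1, norm_neg, norm_add_sq_real, real_inner_smul_right, norm_smul, Real.norm_eq_abs,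
    mul_pow, sq_abs, real_inner_comm]
  field_simp

lemma my_ratio_nonneg {n : ℕ} (v : EuclideanSpace ℝ (Fin n)) : 0 ≤ ratio v := by
  unfold ratio
  split
  · norm_num
  · exact div_nonneg (Finset.sum_nonneg fun i _ => abs_nonneg _) (norm_nonneg _)

end helpers

set_option maxHeartbeats 1000000 in
theorem stmt12 {n : ℕ} (Φ : EuclideanSpace ℝ (Fin n) → ℝ)
    (gΦ : EuclideanSpace ℝ (Fin n) → EuclideanSpace ℝ (Fin n))
    (hdiff : ∀ x, HasGradientAt Φ (gΦ x) x)
    (hbdd : BddBelow (Set.range Φ))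
    (L : ℝ) (hL : 0 ≤ L)
    (hlip : ∀ x y, ‖gΦ x - gΦ y‖ ≤ L * ‖x - y‖)
    (γ β : ℝ) (hγ : 0 < γ) (hβ : 2 * L < β)
    (X : Set (EuclideanSpace ℝ (Fin n)))
    (hX : X = Set.univ ∨ X = {x : EuclideanSpace ℝ (Fin n) | ∀ i, 0 ≤ x i})
    (x y z : ℕ → EuclideanSpace ℝ (Fin n))
    (hADMM : ADMMpSeq β γ X Φ x y z) :
    Filter.Tendsto (fun k => ‖y k - y (k + 1)‖) Filter.atTop (nhds 0) := by
  have hβpos : (0:ℝ) < β := lt_of_le_of_lt (by linarith) hβ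
  have hβne : β ≠ 0 := ne_of_gt hβpos
  obtain ⟨m, hm⟩ := hbdd
  have hm' : ∀ v, m ≤ Φ v := fun v => hm (Set.mem_range_self v)
  -- first-order condition for the y-subproblem
  have hfoc : ∀ k, gΦ (y (k+1)) = z (k+1) := by
    intro k
    have hmin := (hADMM k).2.1
    have hmin' : ∀ u, Φ (y (k+1)) + β/2 * ‖y (k+1) - (x (k+1) + β⁻¹ • z k)‖^2 ≤
        Φ u + β/2 * ‖u - (x (k+1) + β⁻¹ • z k)‖^2 := by
      intro u
      simpa [sub_sub] using hmin u
    have h0 := my_foc hdiff β (x (k+1) + β⁻¹ • z k) (y (k+1)) hmin'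
    rw [(hADMM k).2.2]
    have h1 : gΦ (y (k+1)) = β • ((x (k+1) + β⁻¹ • z k) - y (k+1)) := by
      have h2 := eq_neg_of_add_eq_zero_left h0
      rw [h2, ← smul_neg, neg_sub]
    rw [h1, show (x (k+1) + β⁻¹ • z k) - y (k+1) = β⁻¹ • z k + (x (k+1) - y (k+1)) from by abel,
      smul_add, smul_smul, mul_inv_cancel₀ hβne, one_smul]
  -- Lyapunov function
  set S : ℕ → ℝ := fun k => ratio (x (k+1)) + γ⁻¹ * (Φ (y (k+1)) +
    ⟪z (k+1), x (k+1) - y (k+1)⟫_ℝ + β/2 * ‖x (k+1) - y (k+1)‖^2) with hS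
  set a : ℕ → ℝ := fun k => ‖y (k+1) - y (k+2)‖^2 with ha
  set C0 : ℝ := γ⁻¹ * ((β - L)/2 - L^2/β) with hC0def
  have hC0 : 0 < C0 := by
    rw [hC0def]
    apply mul_pos (inv_pos.mpr hγ)
    have h2 : L^2/β < (β - L)/2 := by
      rw [div_lt_div_iff₀ hβpos (by norm_num : (0:ℝ) < 2)]
      nlinarith [mul_pos (sub_pos.mpr hβ) (show (0:ℝ) < β + L by linarith)]
    linarith
  -- one-step decrease
  have hstep : ∀ k, S (k+1) + C0 * a k ≤ S k := by
    intro k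
    -- x-step
    have hxstep := (hADMM (k+1)).1.2 (x (k+1)) ((hADMM k).1.1)
    have key : ∀ u : EuclideanSpace ℝ (Fin n),
        β/(2*γ) * ‖u - (y (k+1) - β⁻¹ • z (k+1))‖^2 =
        γ⁻¹ * (β/2 * ‖u - y (k+1)‖^2 + ⟪z (k+1), u - y (k+1)⟫_ℝ) +
          γ⁻¹ * (‖z (k+1)‖^2/(2*β)) := by
      intro u
      calc β/(2*γ) * ‖u - (y (k+1) - β⁻¹ • z (k+1))‖^2
          = γ⁻¹ * (β/2 * ‖u - (y (k+1) - β⁻¹ • z (k+1))‖^2) := by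
            rw [div_mul_eq_mul_div, div_mul_eq_mul_div]; rw [mul_comm 2 γ]
            rw [← div_div]; ring
        _ = γ⁻¹ * (β/2 * ‖u - y (k+1)‖^2 + ⟪z (k+1), u - y (k+1)⟫_ℝ +
              ‖z (k+1)‖^2/(2*β)) := by rw [my_expand hβne]
        _ = _ := by ring
    rw [key (x (k+2)), key (x (k+1))] at hxstep
    have hA : ratio (x (k+2)) + γ⁻¹ * (Φ (y (k+1)) + ⟪z (k+1), x (k+2) - y (k+1)⟫_ℝ +
        β/2 * ‖x (k+2) - y (k+1)‖^2) ≤ S k := by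
      rw [hS]
      have hexp : γ⁻¹ * (Φ (y (k+1)) + ⟪z (k+1), x (k+2) - y (k+1)⟫_ℝ +
          β/2 * ‖x (k+2) - y (k+1)‖^2) =
          γ⁻¹ * (β/2 * ‖x (k+2) - y (k+1)‖^2 + ⟪z (k+1), x (k+2) - y (k+1)⟫_ℝ) +
          γ⁻¹ * Φ (y (k+1)) := by ring
      have hexp2 : γ⁻¹ * (Φ (y (k+1)) + ⟪z (k+1), x (k+1) - y (k+1)⟫_ℝ +
          β/2 * ‖x (k+1) - y (k+1)‖^2) =
          γ⁻¹ * (β/2 * ‖x (k+1) - y (k+1)‖^2 + ⟪z (k+1), x (k+1) - y (k+1)⟫_ℝ) +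
          γ⁻¹ * Φ (y (k+1)) := by ring
      linarith [hxstep]
    -- y-step
    have hystep := (hADMM (k+1)).2.1 (y (k+1))
    have hzup : z (k+2) = z (k+1) + β • (x (k+2) - y (k+2)) := (hADMM (k+1)).2.2
    have edesc := (abs_le.mp (my_descent hdiff hlip (y (k+2)) (y (k+1)))).1
    rw [hfoc (k+1)] at edesc
    have eid : ‖y (k+1) - x (k+2) - β⁻¹ • z (k+1)‖^2 =
        ‖y (k+1) - y (k+2)‖^2 +
        2*⟪y (k+1) - y (k+2), y (k+2) - x (k+2) - β⁻¹ • z (k+1)⟫_ℝ +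
        ‖y (k+2) - x (k+2) - β⁻¹ • z (k+1)‖^2 := by
      rw [show y (k+1) - x (k+2) - β⁻¹ • z (k+1) =
        (y (k+1) - y (k+2)) + (y (k+2) - x (k+2) - β⁻¹ • z (k+1)) from by abel,
        norm_add_sq_real]
    have efoc : β • (y (k+2) - x (k+2) - β⁻¹ • z (k+1)) = -(z (k+2)) := by
      rw [smul_sub, smul_smul, mul_inv_cancel₀ hβne, one_smul, hzup]
      module
    have einner : β * ⟪y (k+1) - y (k+2), y (k+2) - x (k+2) - β⁻¹ • z (k+1)⟫_ℝ =
        -⟪z (k+2), y (k+1) - y (k+2)⟫_ℝ := by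
      rw [real_inner_comm, ← real_inner_smul_left, efoc, inner_neg_left]
    have eid2 : β/2 * ‖y (k+1) - x (k+2) - β⁻¹ • z (k+1)‖^2 =
        β/2 * ‖y (k+1) - y (k+2)‖^2 +
        β * ⟪y (k+1) - y (k+2), y (k+2) - x (k+2) - β⁻¹ • z (k+1)⟫_ℝ +
        β/2 * ‖y (k+2) - x (k+2) - β⁻¹ • z (k+1)‖^2 := by rw [eid]; ring
    have hBraw : Φ (y (k+2)) + β/2 * ‖y (k+2) - x (k+2) - β⁻¹ • z (k+1)‖^2 +
        (β - L)/2 * ‖y (k+1) - y (k+2)‖^2 ≤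
        Φ (y (k+1)) + β/2 * ‖y (k+1) - x (k+2) - β⁻¹ • z (k+1)‖^2 := by
      linarith [edesc, eid2, einner]
    have q1 := my_expand' hβne (y (k+2)) (x (k+2)) (z (k+1))
    have q0 := my_expand' hβne (y (k+1)) (x (k+2)) (z (k+1))
    have hB : Φ (y (k+2)) + ⟪z (k+1), x (k+2) - y (k+2)⟫_ℝ + β/2 * ‖x (k+2) - y (k+2)‖^2 +
        (β - L)/2 * ‖y (k+1) - y (k+2)‖^2 ≤
        Φ (y (k+1)) + ⟪z (k+1), x (k+2) - y (k+1)⟫_ℝ + β/2 * ‖x (k+2) - y (k+1)‖^2 := by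
      linarith [hBraw, q1, q0]
    -- z-step
    have h1 : z (k+2) - z (k+1) = β • (x (k+2) - y (k+2)) := by rw [hzup]; abel
    have h2 : ⟪z (k+2) - z (k+1), x (k+2) - y (k+2)⟫_ℝ = β⁻¹ * ‖z (k+2) - z (k+1)‖^2 := by
      rw [h1, real_inner_smul_left, real_inner_self_eq_norm_sq, norm_smul, Real.norm_eq_abs,
        mul_pow, sq_abs]
      field_simp
    have h3 : ‖z (k+2) - z (k+1)‖ ≤ L * ‖y (k+2) - y (k+1)‖ := by
      rw [← hfoc (k+1), ← hfoc k]
      exact hlip _ _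
    have h4 : ‖z (k+2) - z (k+1)‖^2 ≤ L^2 * ‖y (k+2) - y (k+1)‖^2 := by
      nlinarith [norm_nonneg (z (k+2) - z (k+1)), norm_nonneg (y (k+2) - y (k+1))]
    have hC : ⟪z (k+2), x (k+2) - y (k+2)⟫_ℝ - ⟪z (k+1), x (k+2) - y (k+2)⟫_ℝ ≤
        L^2/β * ‖y (k+1) - y (k+2)‖^2 := by
      calc ⟪z (k+2), x (k+2) - y (k+2)⟫_ℝ - ⟪z (k+1), x (k+2) - y (k+2)⟫_ℝ
          = β⁻¹ * ‖z (k+2) - z (k+1)‖^2 := by rw [← inner_sub_left]; exact h2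
        _ ≤ β⁻¹ * (L^2 * ‖y (k+2) - y (k+1)‖^2) :=
            mul_le_mul_of_nonneg_left h4 (inv_nonneg.mpr hβpos.le)
        _ = L^2/β * ‖y (k+1) - y (k+2)‖^2 := by rw [norm_sub_rev]; ring
    -- combine
    have hcomb : Φ (y (k+2)) + ⟪z (k+2), x (k+2) - y (k+2)⟫_ℝ + β/2 * ‖x (k+2) - y (k+2)‖^2 +
        ((β - L)/2 - L^2/β) * ‖y (k+1) - y (k+2)‖^2 ≤
        Φ (y (k+1)) + ⟪z (k+1), x (k+2) - y (k+1)⟫_ℝ + β/2 * ‖x (k+2) - y (k+1)‖^2 := by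
      linarith [hB, hC]
    have hscaled := mul_le_mul_of_nonneg_left hcomb (inv_nonneg.mpr hγ.le)
    rw [hS, hC0def, ha]
    simp only []
    have hgoal2 : γ⁻¹ * (Φ (y (k+1+1)) + ⟪z (k+1+1), x (k+1+1) - y (k+1+1)⟫_ℝ +
        β/2 * ‖x (k+1+1) - y (k+1+1)‖^2) + γ⁻¹ * ((β - L)/2 - L^2/β) * ‖y (k+1) - y (k+2)‖^2 =
        γ⁻¹ * (Φ (y (k+2)) + ⟪z (k+2), x (k+2) - y (k+2)⟫_ℝ + β/2 * ‖x (k+2) - y (k+2)‖^2 +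
          ((β - L)/2 - L^2/β) * ‖y (k+1) - y (k+2)‖^2) := by
      norm_num
      ring
    linarith [hA, hscaled, hgoal2.le, hgoal2.ge]
  -- lower bound
  have hlow : ∀ k, γ⁻¹ * m ≤ S k := by
    intro k
    rw [hS]
    have hdesc := (abs_le.mp (my_descent hdiff hlip (y (k+1)) (x (k+1)))).2
    rw [hfoc k] at hdesc
    have hrat : 0 ≤ ratio (x (k+1)) := my_ratio_nonneg _
    have hmx := hm' (x (k+1))
    have hbr : m ≤ Φ (y (k+1)) + ⟪z (k+1), x (k+1) - y (k+1)⟫_ℝ +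
        β/2 * ‖x (k+1) - y (k+1)‖^2 := by
      nlinarith [sq_nonneg ‖x (k+1) - y (k+1)‖]
    have := mul_le_mul_of_nonneg_left hbr (inv_nonneg.mpr hγ.le)
    linarith
  -- telescoping
  have htel : ∀ N, ∑ i ∈ Finset.range N, (C0 * a i) ≤ S 0 - S N := by
    intro N
    induction N with
    | zero => simp
    | succ N ih =>
      rw [Finset.sum_range_succ]
      have := hstep N
      linarith
  have htel' : ∀ N, ∑ i ∈ Finset.range N, a i ≤ (S 0 - γ⁻¹ * m) / C0 := by
    intro N
    rw [le_div_iff₀ hC0]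
    have h1 := htel N
    have h2 := hlow N
    calc (∑ i ∈ Finset.range N, a i) * C0 = ∑ i ∈ Finset.range N, (C0 * a i) := by
          rw [Finset.sum_mul]; exact Finset.sum_congr rfl fun i _ => mul_comm _ _
      _ ≤ S 0 - S N := h1
      _ ≤ S 0 - γ⁻¹ * m := sub_le_sub_left h2 (S 0)
  have hsummable : Summable a :=
    summable_of_sum_range_le (fun k => by rw [ha]; positivity) htel'
  have hto0 : Filter.Tendsto a Filter.atTop (nhds 0) := hsummable.tendsto_atTop_zero
  have hsq : Filter.Tendsto (fun k => Real.sqrt (a k)) Filter.atTop (nhds 0) := by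
    have := (Real.continuous_sqrt.tendsto 0).comp hto0
    rw [Real.sqrt_zero] at this
    exact this
  have hnorm : Filter.Tendsto (fun k => ‖y (k+1) - y (k+2)‖) Filter.atTop (nhds 0) := by
    convert hsq using 2 with k
    rw [ha]
    exact (Real.sqrt_sq (norm_nonneg _)).symm
  rw [← Filter.tendsto_add_atTop_iff_nat 1]
  exact hnorm
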